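/- Let H ∈ (1/2,1), α = 1−H, and T > 0. Then the quadruple integral ∫₀ᵀ∫₀ᵀ∫ᵤᵀ∫ₓᵀ u^(−α) x^(−α) |u−x|^(2H−2) v^(α−1) y^(α−1) |v−y|^(2H−2) dy dv dx du is finite. -/

import Mathlib

open MeasureTheory Set
open scoped ENNReal

lemma lint_rpow_Ioc (p : ℝ) (hp : -1 < p) (b : ℝ) (hb : 0 ≤ b) :
    ∫⁻ x in Ioc (0:ℝ) b, ENNReal.ofReal (x ^ p) = ENNReal.ofReal (b ^ (p+1) / (p+1)) := by
  have hInt : IntegrableOn (fun x : ℝ => x ^ p) (Ioc 0 b) := by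
    have h := intervalIntegral.intervalIntegrable_rpow' (a := 0) (b := b) hp
    rwa [intervalIntegrable_iff_integrableOn_Ioc_of_le hb] at h
  have hnn : 0 ≤ᵐ[volume.restrict (Ioc (0:ℝ) b)] fun x => x ^ p := by
    filter_upwards [ae_restrict_mem measurableSet_Ioc] with x hx
    exact Real.rpow_nonneg hx.1.le p
  rw [← ofReal_integral_eq_lintegral_ofReal hInt hnn, ← intervalIntegral.integral_of_le hb,
    integral_rpow (Or.inl hp), Real.zero_rpow (by linarith), sub_zero]

lemma lint_rpow_Ioo_lt_top (p : ℝ) (hp : -1 < p) (b : ℝ) :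
    ∫⁻ x in Ioo (0:ℝ) b, ENNReal.ofReal (x ^ p) < ⊤ := by
  have hsub : Ioo (0:ℝ) b ⊆ Ioc 0 (max b 0) :=
    fun x hx => ⟨hx.1, hx.2.le.trans (le_max_left _ _)⟩
  calc ∫⁻ x in Ioo (0:ℝ) b, ENNReal.ofReal (x ^ p)
      ≤ ∫⁻ x in Ioc (0:ℝ) (max b 0), ENNReal.ofReal (x ^ p) := lintegral_mono_set hsub
    _ = ENNReal.ofReal ((max b 0) ^ (p+1) / (p+1)) := lint_rpow_Ioc p hp _ (le_max_right _ _)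
    _ < ⊤ := ENNReal.ofReal_lt_top

lemma lint_abs_Ioo (p : ℝ) (hp : -1 < p) (hp0 : p ≤ 0) (u : ℝ) (hu : 0 ≤ u) :
    ∫⁻ x in Ioo (0:ℝ) (2*u), ENNReal.ofReal (|u - x| ^ p)
      ≤ ENNReal.ofReal (2 * (u ^ (p+1) / (p+1))) := by
  have hV : 0 ≤ u ^ (p+1) / (p+1) := div_nonneg (Real.rpow_nonneg hu _) (by linarith)
  have hshift : ∀ s : Set ℝ,
      ∫⁻ x in (fun t : ℝ => t + u) ⁻¹' s, ENNReal.ofReal (|u - (x + u)| ^ p)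
        = ∫⁻ x in s, ENNReal.ofReal (|u - x| ^ p) :=
    fun s => (measurePreserving_add_right volume u).setLIntegral_comp_preimage_emb
      (Homeomorph.addRight u).measurableEmbedding (fun x => ENNReal.ofReal (|u - x| ^ p)) s
  have habs : ∀ t : ℝ, |u - (t + u)| = |t| := by
    intro t; rw [abs_sub_comm]; ring_nf
  -- piece over Ioc 0 u
  have hpre1 : (fun t : ℝ => t + u) ⁻¹' Ioc (0:ℝ) u = Ioc (-u) 0 := by
    ext t; simp only [mem_preimage, mem_Ioc]; constructor <;> intro h <;>
      exact ⟨by linarith [h.1], by linarith [h.2]⟩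
  have hA1 : ∫⁻ x in Ioc (0:ℝ) u, ENNReal.ofReal (|u - x| ^ p)
      = ∫⁻ t in Ioc (-u) (0:ℝ), ENNReal.ofReal (|t| ^ p) := by
    rw [← hshift (Ioc 0 u), hpre1]
    exact setLIntegral_congr_fun measurableSet_Ioc (fun t _ => by rw [habs t])
  have hneg : ∫⁻ t in Ioc (-u) (0:ℝ), ENNReal.ofReal (|t| ^ p)
      = ∫⁻ t in Ico (0:ℝ) u, ENNReal.ofReal (|t| ^ p) := by
    have := (Measure.measurePreserving_neg (volume : Measure ℝ)).setLIntegral_comp_preimage_emb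
      (Homeomorph.neg ℝ).measurableEmbedding
      (fun t => ENNReal.ofReal (|t| ^ p)) (Ioc (-u) 0)
    have hpre2 : (Neg.neg : ℝ → ℝ) ⁻¹' Ioc (-u) 0 = Ico 0 u := by
      ext t; simp only [mem_preimage, mem_Ioc, mem_Ico]; constructor <;> intro h <;>
        exact ⟨by linarith [h.1], by linarith [h.2]⟩
    rw [hpre2] at this
    rw [← this]
    exact (setLIntegral_congr_fun measurableSet_Ico
      (fun t _ => by rw [abs_neg])).symm
  have hIco : ∫⁻ t in Ico (0:ℝ) u, ENNReal.ofReal (|t| ^ p)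
      = ∫⁻ t in Ioc (0:ℝ) u, ENNReal.ofReal (|t| ^ p) :=
    setLIntegral_congr Ico_ae_eq_Ioc
  have habs_pos : ∫⁻ t in Ioc (0:ℝ) u, ENNReal.ofReal (|t| ^ p)
      = ∫⁻ t in Ioc (0:ℝ) u, ENNReal.ofReal (t ^ p) :=
    setLIntegral_congr_fun measurableSet_Ioc
      (fun t ht => by rw [abs_of_pos ht.1])
  have hval : ∫⁻ t in Ioc (0:ℝ) u, ENNReal.ofReal (t ^ p)
      = ENNReal.ofReal (u ^ (p+1) / (p+1)) := lint_rpow_Ioc p hp u hu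
  -- piece over Ioo u (2u)
  have hpre3 : (fun t : ℝ => t + u) ⁻¹' Ioo u (2*u) = Ioo (0:ℝ) u := by
    ext t; simp only [mem_preimage, mem_Ioo]; constructor <;> intro h <;>
      exact ⟨by linarith [h.1], by linarith [h.2]⟩
  have hA2 : ∫⁻ x in Ioo u (2*u), ENNReal.ofReal (|u - x| ^ p)
      = ∫⁻ t in Ioo (0:ℝ) u, ENNReal.ofReal (|t| ^ p) := by
    rw [← hshift (Ioo u (2*u)), hpre3]
    exact setLIntegral_congr_fun measurableSet_Ioo (fun t _ => by rw [habs t])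
  have hA2le : ∫⁻ x in Ioo u (2*u), ENNReal.ofReal (|u - x| ^ p)
      ≤ ENNReal.ofReal (u ^ (p+1) / (p+1)) := by
    rw [hA2]
    calc ∫⁻ t in Ioo (0:ℝ) u, ENNReal.ofReal (|t| ^ p)
        ≤ ∫⁻ t in Ioc (0:ℝ) u, ENNReal.ofReal (|t| ^ p) := lintegral_mono_set Ioo_subset_Ioc_self
      _ = ENNReal.ofReal (u ^ (p+1) / (p+1)) := by rw [habs_pos, hval]
  have hcover : Ioo (0:ℝ) (2*u) ⊆ Ioc 0 u ∪ Ioo u (2*u) := by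
    intro x hx
    rcases le_or_gt x u with h | h
    · exact Or.inl ⟨hx.1, h⟩
    · exact Or.inr ⟨h, hx.2⟩
  calc ∫⁻ x in Ioo (0:ℝ) (2*u), ENNReal.ofReal (|u - x| ^ p)
      ≤ ∫⁻ x in Ioc (0:ℝ) u ∪ Ioo u (2*u), ENNReal.ofReal (|u - x| ^ p) :=
        lintegral_mono_set hcover
    _ ≤ (∫⁻ x in Ioc (0:ℝ) u, ENNReal.ofReal (|u - x| ^ p))
        + ∫⁻ x in Ioo u (2*u), ENNReal.ofReal (|u - x| ^ p) := lintegral_union_le _ _ _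
    _ ≤ ENNReal.ofReal (u ^ (p+1) / (p+1)) + ENNReal.ofReal (u ^ (p+1) / (p+1)) := by
        refine add_le_add ?_ hA2le
        rw [hA1, hneg, hIco, habs_pos, hval]
    _ = ENNReal.ofReal (2 * (u ^ (p+1) / (p+1))) := by
        rw [← ENNReal.ofReal_add hV hV]; ring_nf

lemma half_rpow_le_two {e : ℝ} (he : -1 ≤ e) : ((1:ℝ)/2) ^ e ≤ 2 := by
  have h : ((1:ℝ)/2) ^ e = (2:ℝ) ^ (-e) := by
    rw [one_div, Real.inv_rpow (by norm_num : (0:ℝ) ≤ 2), ← Real.rpow_neg (by norm_num : (0:ℝ) ≤ 2)]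
  rw [h]
  calc (2:ℝ) ^ (-e) ≤ (2:ℝ) ^ (1:ℝ) :=
        Real.rpow_le_rpow_of_exponent_le one_le_two (by linarith)
    _ = 2 := Real.rpow_one 2

lemma inner_bound (H T : ℝ) (hH : 1/2 < H) (hH1 : H < 1) (hT : 0 < T) {u : ℝ}
    (hu : u ∈ Ioo (0:ℝ) T) :
    ∫⁻ x in Ioo (0:ℝ) T, ENNReal.ofReal (x ^ (-(1:ℝ)/2) * |u - x| ^ (2*H - 2))
      ≤ ENNReal.ofReal (4 * u ^ (2*H - 2 + 1/2))
        + ENNReal.ofReal (4/(2*H-1) * u ^ (2*H - 2 + 1/2))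
        + ENNReal.ofReal (2 * (T ^ (H - 1/2) / (H - 1/2)) * u ^ (H - 1)) := by
  have hu0 : 0 < u := hu.1
  have hβ1 : (-1:ℝ) < 2*H - 2 := by linarith
  have hβ0 : (2*H - 2 : ℝ) ≤ 0 := by linarith
  -- Piece 1 : x ∈ Ioc 0 (u/2)
  have hP1 : ∫⁻ x in Ioc (0:ℝ) (u/2), ENNReal.ofReal (x ^ (-(1:ℝ)/2) * |u - x| ^ (2*H - 2))
      ≤ ENNReal.ofReal (4 * u ^ (2*H - 2 + 1/2)) := by
    have hpt : ∀ x ∈ Ioc (0:ℝ) (u/2),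
        ENNReal.ofReal (x ^ (-(1:ℝ)/2) * |u - x| ^ (2*H - 2))
          ≤ ENNReal.ofReal (2 * u ^ (2*H-2)) * ENNReal.ofReal (x ^ (-(1:ℝ)/2)) := by
      intro x hx
      have hx0 : 0 < x := hx.1
      have habs : |u - x| = u - x := abs_of_pos (by linarith [hx.2, hu0])
      have h2 : (u - x) ^ (2*H-2) ≤ (u/2) ^ (2*H-2) :=
        Real.rpow_le_rpow_of_nonpos (by linarith) (by linarith [hx.2]) hβ0
      have h3 : (u/2 : ℝ) ^ (2*H-2) ≤ 2 * u ^ (2*H-2) := by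
        rw [show u/2 = u * (1/2) by ring, Real.mul_rpow hu0.le (by norm_num)]
        calc u ^ (2*H-2) * ((1:ℝ)/2) ^ (2*H-2)
            ≤ u ^ (2*H-2) * 2 :=
              mul_le_mul_of_nonneg_left (half_rpow_le_two (by linarith)) (Real.rpow_nonneg hu0.le _)
          _ = 2 * u ^ (2*H-2) := mul_comm _ _
      rw [← ENNReal.ofReal_mul (by positivity)]
      apply ENNReal.ofReal_le_ofReal
      rw [habs, mul_comm (2 * u ^ (2*H-2)) _]
      exact mul_le_mul_of_nonneg_left (h2.trans h3) (Real.rpow_nonneg hx0.le _)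
    calc ∫⁻ x in Ioc (0:ℝ) (u/2), ENNReal.ofReal (x ^ (-(1:ℝ)/2) * |u - x| ^ (2*H - 2))
        ≤ ∫⁻ x in Ioc (0:ℝ) (u/2),
            ENNReal.ofReal (2 * u ^ (2*H-2)) * ENNReal.ofReal (x ^ (-(1:ℝ)/2)) :=
          setLIntegral_mono' measurableSet_Ioc hpt
      _ = ENNReal.ofReal (2 * u ^ (2*H-2)) * ∫⁻ x in Ioc (0:ℝ) (u/2),
            ENNReal.ofReal (x ^ (-(1:ℝ)/2)) := lintegral_const_mul' _ _ ENNReal.ofReal_ne_top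
      _ ≤ ENNReal.ofReal (2 * u ^ (2*H-2)) * ∫⁻ x in Ioc (0:ℝ) u,
            ENNReal.ofReal (x ^ (-(1:ℝ)/2)) := by
          exact mul_le_mul_right (lintegral_mono_set (Ioc_subset_Ioc_right (by linarith))) _
      _ = ENNReal.ofReal (2 * u ^ (2*H-2)) * ENNReal.ofReal (u ^ (-(1:ℝ)/2 + 1) / (-(1:ℝ)/2 + 1)) := by
          rw [lint_rpow_Ioc (-(1:ℝ)/2) (by norm_num) u hu0.le]
      _ = ENNReal.ofReal (4 * u ^ (2*H - 2 + 1/2)) := by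
          rw [← ENNReal.ofReal_mul (by positivity)]
          congr 1
          rw [show (-(1:ℝ)/2 + 1) = (1:ℝ)/2 by norm_num,
            Real.rpow_add hu0 (2*H-2) (1/2)]
          ring
  -- Piece 2 : x ∈ Ioo (u/2) (2u)
  have hP2 : ∫⁻ x in Ioo (u/2) (2*u), ENNReal.ofReal (x ^ (-(1:ℝ)/2) * |u - x| ^ (2*H - 2))
      ≤ ENNReal.ofReal (4/(2*H-1) * u ^ (2*H - 2 + 1/2)) := by
    have hpt : ∀ x ∈ Ioo (u/2) (2*u),
        ENNReal.ofReal (x ^ (-(1:ℝ)/2) * |u - x| ^ (2*H - 2))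
          ≤ ENNReal.ofReal (2 * u ^ (-(1:ℝ)/2)) * ENNReal.ofReal (|u - x| ^ (2*H-2)) := by
      intro x hx
      have hx0 : 0 < x := lt_trans (by linarith) hx.1
      have h2 : x ^ (-(1:ℝ)/2) ≤ (u/2) ^ (-(1:ℝ)/2) :=
        Real.rpow_le_rpow_of_nonpos (by linarith) hx.1.le (by norm_num)
      have h3 : (u/2 : ℝ) ^ (-(1:ℝ)/2) ≤ 2 * u ^ (-(1:ℝ)/2) := by
        rw [show u/2 = u * (1/2) by ring, Real.mul_rpow hu0.le (by norm_num)]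
        calc u ^ (-(1:ℝ)/2) * ((1:ℝ)/2) ^ (-(1:ℝ)/2)
            ≤ u ^ (-(1:ℝ)/2) * 2 :=
              mul_le_mul_of_nonneg_left (half_rpow_le_two (by norm_num)) (Real.rpow_nonneg hu0.le _)
          _ = 2 * u ^ (-(1:ℝ)/2) := mul_comm _ _
      rw [← ENNReal.ofReal_mul (by positivity)]
      apply ENNReal.ofReal_le_ofReal
      exact mul_le_mul_of_nonneg_right (h2.trans h3) (Real.rpow_nonneg (abs_nonneg _) _)
    calc ∫⁻ x in Ioo (u/2) (2*u), ENNReal.ofReal (x ^ (-(1:ℝ)/2) * |u - x| ^ (2*H - 2))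
        ≤ ∫⁻ x in Ioo (u/2) (2*u),
            ENNReal.ofReal (2 * u ^ (-(1:ℝ)/2)) * ENNReal.ofReal (|u - x| ^ (2*H-2)) :=
          setLIntegral_mono' measurableSet_Ioo hpt
      _ = ENNReal.ofReal (2 * u ^ (-(1:ℝ)/2)) * ∫⁻ x in Ioo (u/2) (2*u),
            ENNReal.ofReal (|u - x| ^ (2*H-2)) := lintegral_const_mul' _ _ ENNReal.ofReal_ne_top
      _ ≤ ENNReal.ofReal (2 * u ^ (-(1:ℝ)/2)) * ∫⁻ x in Ioo (0:ℝ) (2*u),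
            ENNReal.ofReal (|u - x| ^ (2*H-2)) := by
          exact mul_le_mul_right (lintegral_mono_set (Ioo_subset_Ioo (by linarith) le_rfl)) _
      _ ≤ ENNReal.ofReal (2 * u ^ (-(1:ℝ)/2))
            * ENNReal.ofReal (2 * (u ^ (2*H-2+1) / (2*H-2+1))) := by
          gcongr
          exact lint_abs_Ioo (2*H-2) hβ1 hβ0 u hu0.le
      _ = ENNReal.ofReal (4/(2*H-1) * u ^ (2*H - 2 + 1/2)) := by
          rw [← ENNReal.ofReal_mul (by positivity)]
          congr 1
          have he : u ^ (2*H - 2 + 1/2) = u ^ (-(1:ℝ)/2) * u ^ (2*H-2+1) := by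
            rw [← Real.rpow_add hu0]; congr 1; ring
          rw [he]
          have h21 : (2*H - 2 + 1 : ℝ) = 2*H - 1 := by ring
          rw [h21]
          field_simp
          ring
  -- Piece 3 : x ∈ Ico (2u) T
  have hP3 : ∫⁻ x in Ico (2*u) T, ENNReal.ofReal (x ^ (-(1:ℝ)/2) * |u - x| ^ (2*H - 2))
      ≤ ENNReal.ofReal (2 * (T ^ (H - 1/2) / (H - 1/2)) * u ^ (H - 1)) := by
    have hpt : ∀ x ∈ Ico (2*u) T,
        ENNReal.ofReal (x ^ (-(1:ℝ)/2) * |u - x| ^ (2*H - 2))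
          ≤ ENNReal.ofReal (2 * u ^ (H-1)) * ENNReal.ofReal (x ^ (H - 3/2)) := by
      intro x hx
      have hx0 : 0 < x := lt_of_lt_of_le (by linarith) hx.1
      have hux : u ≤ x := by linarith [hx.1]
      have habs : |u - x| = x - u := by rw [abs_sub_comm]; exact abs_of_nonneg (by linarith)
      have h2 : (x - u) ^ (2*H-2) ≤ (x/2) ^ (2*H-2) :=
        Real.rpow_le_rpow_of_nonpos (by linarith) (by linarith [hx.1]) hβ0
      have h3 : (x/2 : ℝ) ^ (2*H-2) ≤ 2 * x ^ (2*H-2) := by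
        rw [show x/2 = x * (1/2) by ring, Real.mul_rpow hx0.le (by norm_num)]
        calc x ^ (2*H-2) * ((1:ℝ)/2) ^ (2*H-2)
            ≤ x ^ (2*H-2) * 2 :=
              mul_le_mul_of_nonneg_left (half_rpow_le_two (by linarith)) (Real.rpow_nonneg hx0.le _)
          _ = 2 * x ^ (2*H-2) := mul_comm _ _
      have hxe : x ^ (-(1:ℝ)/2) * x ^ (2*H-2) = x ^ (H-1) * x ^ (H - 3/2) := by
        rw [← Real.rpow_add hx0, ← Real.rpow_add hx0]; congr 1; ring
      have hxu : x ^ (H-1) ≤ u ^ (H-1) :=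
        Real.rpow_le_rpow_of_nonpos hu0 hux (by linarith)
      rw [← ENNReal.ofReal_mul (by positivity)]
      apply ENNReal.ofReal_le_ofReal
      calc x ^ (-(1:ℝ)/2) * |u - x| ^ (2*H-2)
          ≤ x ^ (-(1:ℝ)/2) * (2 * x ^ (2*H-2)) := by
            rw [habs]
            exact mul_le_mul_of_nonneg_left (h2.trans h3) (Real.rpow_nonneg hx0.le _)
        _ = 2 * (x ^ (H-1) * x ^ (H - 3/2)) := by rw [← hxe]; ring
        _ ≤ 2 * (u ^ (H-1) * x ^ (H - 3/2)) := by
            have := mul_le_mul_of_nonneg_right hxu (Real.rpow_nonneg hx0.le (H - 3/2))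
            linarith
        _ = 2 * u ^ (H-1) * x ^ (H - 3/2) := by ring
    calc ∫⁻ x in Ico (2*u) T, ENNReal.ofReal (x ^ (-(1:ℝ)/2) * |u - x| ^ (2*H - 2))
        ≤ ∫⁻ x in Ico (2*u) T,
            ENNReal.ofReal (2 * u ^ (H-1)) * ENNReal.ofReal (x ^ (H - 3/2)) :=
          setLIntegral_mono' measurableSet_Ico hpt
      _ = ENNReal.ofReal (2 * u ^ (H-1)) * ∫⁻ x in Ico (2*u) T,
            ENNReal.ofReal (x ^ (H - 3/2)) := lintegral_const_mul' _ _ ENNReal.ofReal_ne_top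
      _ ≤ ENNReal.ofReal (2 * u ^ (H-1)) * ∫⁻ x in Ioc (0:ℝ) T,
            ENNReal.ofReal (x ^ (H - 3/2)) := by
          exact mul_le_mul_right (lintegral_mono_set (show Ico (2*u) T ⊆ Ioc (0:ℝ) T from fun x hx => ⟨lt_of_lt_of_le (by linarith) hx.1, hx.2.le⟩)) _
      _ = ENNReal.ofReal (2 * u ^ (H-1)) * ENNReal.ofReal (T ^ (H - 3/2 + 1) / (H - 3/2 + 1)) := by
          rw [lint_rpow_Ioc (H - 3/2) (by linarith) T hT.le]
      _ = ENNReal.ofReal (2 * (T ^ (H - 1/2) / (H - 1/2)) * u ^ (H - 1)) := by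
          rw [← ENNReal.ofReal_mul (by positivity),
            show (H - 3/2 + 1 : ℝ) = H - 1/2 by ring]
          congr 1
          ring
  -- assemble
  have hcover : Ioo (0:ℝ) T ⊆ Ioc 0 (u/2) ∪ (Ioo (u/2) (2*u) ∪ Ico (2*u) T) := by
    intro x hx
    rcases le_or_gt x (u/2) with h | h
    · exact Or.inl ⟨hx.1, h⟩
    · rcases lt_or_ge x (2*u) with h2 | h2
      · exact Or.inr (Or.inl ⟨h, h2⟩)
      · exact Or.inr (Or.inr ⟨h2, hx.2⟩)
  calc ∫⁻ x in Ioo (0:ℝ) T, ENNReal.ofReal (x ^ (-(1:ℝ)/2) * |u - x| ^ (2*H - 2))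
      ≤ ∫⁻ x in Ioc (0:ℝ) (u/2) ∪ (Ioo (u/2) (2*u) ∪ Ico (2*u) T),
          ENNReal.ofReal (x ^ (-(1:ℝ)/2) * |u - x| ^ (2*H - 2)) := lintegral_mono_set hcover
    _ ≤ (∫⁻ x in Ioc (0:ℝ) (u/2), ENNReal.ofReal (x ^ (-(1:ℝ)/2) * |u - x| ^ (2*H - 2)))
        + ((∫⁻ x in Ioo (u/2) (2*u), ENNReal.ofReal (x ^ (-(1:ℝ)/2) * |u - x| ^ (2*H - 2)))
          + ∫⁻ x in Ico (2*u) T, ENNReal.ofReal (x ^ (-(1:ℝ)/2) * |u - x| ^ (2*H - 2))) :=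
        le_trans (lintegral_union_le _ _ _) (add_le_add_right (lintegral_union_le _ _ _) _)
    _ ≤ ENNReal.ofReal (4 * u ^ (2*H - 2 + 1/2))
        + (ENNReal.ofReal (4/(2*H-1) * u ^ (2*H - 2 + 1/2))
          + ENNReal.ofReal (2 * (T ^ (H - 1/2) / (H - 1/2)) * u ^ (H - 1))) :=
        add_le_add hP1 (add_le_add hP2 hP3)
    _ = _ := by rw [add_assoc]

lemma J_lt_top (H T : ℝ) (hH : 1/2 < H) (hH1 : H < 1) (hT : 0 < T) :
    (∫⁻ u in Ioo (0:ℝ) T, ∫⁻ x in Ioo (0:ℝ) T,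
      ENNReal.ofReal (u ^ (-(1:ℝ)/2) * x ^ (-(1:ℝ)/2) * |u - x| ^ (2*H - 2))) < ⊤ := by
  have key : ∀ u ∈ Ioo (0:ℝ) T,
      (∫⁻ x in Ioo (0:ℝ) T,
        ENNReal.ofReal (u ^ (-(1:ℝ)/2) * x ^ (-(1:ℝ)/2) * |u - x| ^ (2*H - 2)))
      ≤ ENNReal.ofReal (4 * u ^ (2*H - 2)) + ENNReal.ofReal (4/(2*H-1) * u ^ (2*H - 2))
        + ENNReal.ofReal (2 * (T ^ (H - 1/2) / (H - 1/2)) * u ^ (H - 3/2)) := by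
    intro u hu
    have hu0 : 0 < u := hu.1
    have h1 : ∫⁻ x in Ioo (0:ℝ) T,
        ENNReal.ofReal (u ^ (-(1:ℝ)/2) * x ^ (-(1:ℝ)/2) * |u - x| ^ (2*H - 2))
      = ENNReal.ofReal (u ^ (-(1:ℝ)/2)) * ∫⁻ x in Ioo (0:ℝ) T,
          ENNReal.ofReal (x ^ (-(1:ℝ)/2) * |u - x| ^ (2*H - 2)) := by
      rw [← lintegral_const_mul' _ _ ENNReal.ofReal_ne_top]
      refine setLIntegral_congr_fun measurableSet_Ioo (fun x hx => ?_)
      rw [mul_assoc, ENNReal.ofReal_mul (Real.rpow_nonneg hu0.le _)]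
    have h11 : u ^ (-(1:ℝ)/2) * u ^ ((1:ℝ)/2) = 1 := by
      rw [← Real.rpow_add hu0]
      norm_num
    have e1 : ENNReal.ofReal (u ^ (-(1:ℝ)/2)) * ENNReal.ofReal (4 * u ^ (2*H-2+1/2))
        = ENNReal.ofReal (4 * u ^ (2*H-2)) := by
      rw [← ENNReal.ofReal_mul (Real.rpow_nonneg hu0.le _)]
      congr 1
      rw [Real.rpow_add hu0 (2*H-2) (1/2)]
      linear_combination (4 * u ^ (2*H-2)) * h11
    have e2 : ENNReal.ofReal (u ^ (-(1:ℝ)/2)) * ENNReal.ofReal (4/(2*H-1) * u ^ (2*H-2+1/2))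
        = ENNReal.ofReal (4/(2*H-1) * u ^ (2*H-2)) := by
      rw [← ENNReal.ofReal_mul (Real.rpow_nonneg hu0.le _)]
      congr 1
      rw [Real.rpow_add hu0 (2*H-2) (1/2)]
      linear_combination (4/(2*H-1) * u ^ (2*H-2)) * h11
    have e3 : ENNReal.ofReal (u ^ (-(1:ℝ)/2))
          * ENNReal.ofReal (2 * (T ^ (H - 1/2) / (H - 1/2)) * u ^ (H-1))
        = ENNReal.ofReal (2 * (T ^ (H - 1/2) / (H - 1/2)) * u ^ (H-3/2)) := by
      rw [← ENNReal.ofReal_mul (Real.rpow_nonneg hu0.le _)]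
      congr 1
      rw [show (H-1 : ℝ) = (H-3/2) + (1/2) by ring, Real.rpow_add hu0]
      linear_combination (2 * (T ^ (H - 1/2) / (H - 1/2)) * u ^ (H-3/2)) * h11
    calc ∫⁻ x in Ioo (0:ℝ) T,
          ENNReal.ofReal (u ^ (-(1:ℝ)/2) * x ^ (-(1:ℝ)/2) * |u - x| ^ (2*H - 2))
        = ENNReal.ofReal (u ^ (-(1:ℝ)/2)) * ∫⁻ x in Ioo (0:ℝ) T,
            ENNReal.ofReal (x ^ (-(1:ℝ)/2) * |u - x| ^ (2*H - 2)) := h1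
      _ ≤ ENNReal.ofReal (u ^ (-(1:ℝ)/2)) *
            (ENNReal.ofReal (4 * u ^ (2*H - 2 + 1/2))
              + ENNReal.ofReal (4/(2*H-1) * u ^ (2*H - 2 + 1/2))
              + ENNReal.ofReal (2 * (T ^ (H - 1/2) / (H - 1/2)) * u ^ (H - 1))) :=
          mul_le_mul_right (inner_bound H T hH hH1 hT hu) _
      _ = ENNReal.ofReal (4 * u ^ (2*H - 2)) + ENNReal.ofReal (4/(2*H-1) * u ^ (2*H - 2))
            + ENNReal.ofReal (2 * (T ^ (H - 1/2) / (H - 1/2)) * u ^ (H - 3/2)) := by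
          rw [mul_add, mul_add, e1, e2, e3]
  have fin : ∀ (c e : ℝ), 0 ≤ c → -1 < e →
      ∫⁻ u in Ioo (0:ℝ) T, ENNReal.ofReal (c * u ^ e) < ⊤ := by
    intro c e hc he
    simp_rw [fun u : ℝ => (ENNReal.ofReal_mul hc : ENNReal.ofReal (c * u ^ e) = _)]
    rw [lintegral_const_mul' _ _ ENNReal.ofReal_ne_top]
    exact ENNReal.mul_lt_top ENNReal.ofReal_lt_top (lint_rpow_Ioo_lt_top e he T)
  calc (∫⁻ u in Ioo (0:ℝ) T, ∫⁻ x in Ioo (0:ℝ) T,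
        ENNReal.ofReal (u ^ (-(1:ℝ)/2) * x ^ (-(1:ℝ)/2) * |u - x| ^ (2*H - 2)))
      ≤ ∫⁻ u in Ioo (0:ℝ) T,
          (ENNReal.ofReal (4 * u ^ (2*H - 2)) + ENNReal.ofReal (4/(2*H-1) * u ^ (2*H - 2))
            + ENNReal.ofReal (2 * (T ^ (H - 1/2) / (H - 1/2)) * u ^ (H - 3/2))) :=
        setLIntegral_mono' measurableSet_Ioo key
    _ = (∫⁻ u in Ioo (0:ℝ) T,
          (ENNReal.ofReal (4 * u ^ (2*H - 2)) + ENNReal.ofReal (4/(2*H-1) * u ^ (2*H - 2))))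
        + ∫⁻ u in Ioo (0:ℝ) T,
            ENNReal.ofReal (2 * (T ^ (H - 1/2) / (H - 1/2)) * u ^ (H - 3/2)) := by
        have hm : ∀ c e : ℝ, Measurable fun u : ℝ => ENNReal.ofReal (c * u ^ e) :=
          fun c e => (measurable_const.mul (by measurability)).ennreal_ofReal
        exact lintegral_add_left ((hm _ _).add (hm _ _)) _
    _ < ⊤ := by
        have hm : ∀ c e : ℝ, Measurable fun u : ℝ => ENNReal.ofReal (c * u ^ e) :=
          fun c e => (measurable_const.mul (by measurability)).ennreal_ofReal
        rw [lintegral_add_left (hm _ _)]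
        have f1 := fin 4 (2*H-2) (by norm_num) (by linarith)
        have f2 := fin (4/(2*H-1)) (2*H-2) (div_nonneg (by norm_num) (by linarith)) (by linarith)
        have f3 := fin (2 * (T ^ (H - 1/2) / (H - 1/2))) (H - 3/2)
          (mul_nonneg (by norm_num) (div_nonneg (Real.rpow_nonneg hT.le _) (by linarith)))
          (by linarith)
        exact ENNReal.add_lt_top.mpr ⟨ENNReal.add_lt_top.mpr ⟨f1, f2⟩, f3⟩

lemma pair_le (H : ℝ) (hH : 1/2 < H) {u v : ℝ} (hu : 0 < u) (huv : u < v) :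
    u ^ (H-1) * v ^ (-H) ≤ u ^ (-(1:ℝ)/2) * v ^ (-(1:ℝ)/2) := by
  have hv : 0 < v := hu.trans huv
  have h1 : u ^ (H-1) = u ^ (-(1:ℝ)/2) * u ^ (H-1/2) := by
    rw [← Real.rpow_add hu]; congr 1; ring
  have h2 : v ^ (-H) = v ^ (-(1:ℝ)/2) * v ^ (-(H-1/2)) := by
    rw [← Real.rpow_add hv]; congr 1; ring
  have h3 : u ^ (H-1/2) ≤ v ^ (H-1/2) := Real.rpow_le_rpow hu.le huv.le (by linarith)
  have h4 : u ^ (H-1/2) * v ^ (-(H-1/2)) ≤ 1 := by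
    rw [Real.rpow_neg hv.le, ← div_eq_mul_inv, div_le_one (Real.rpow_pos_of_pos hv _)]
    exact h3
  have hnn : (0:ℝ) ≤ u ^ (-(1:ℝ)/2) * v ^ (-(1:ℝ)/2) :=
    mul_nonneg (Real.rpow_nonneg hu.le _) (Real.rpow_nonneg hv.le _)
  calc u ^ (H-1) * v ^ (-H)
      = (u ^ (-(1:ℝ)/2) * v ^ (-(1:ℝ)/2)) * (u ^ (H-1/2) * v ^ (-(H-1/2))) := by
        rw [h1, h2]; ring
    _ ≤ (u ^ (-(1:ℝ)/2) * v ^ (-(1:ℝ)/2)) * 1 := mul_le_mul_of_nonneg_left h4 hnn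
    _ = u ^ (-(1:ℝ)/2) * v ^ (-(1:ℝ)/2) := mul_one _

theorem stmt14 (H α T : ℝ) (hH : 1/2 < H) (hH1 : H < 1)
    (hα : α = 1 - H) (hT : 0 < T) :
    (∫⁻ u in Set.Ioo (0:ℝ) T, ∫⁻ x in Set.Ioo (0:ℝ) T,
      ∫⁻ v in Set.Ioo u T, ∫⁻ y in Set.Ioo x T,
        ENNReal.ofReal (u ^ (-α) * x ^ (-α) * |u - x| ^ (2*H - 2) *
          v ^ (α - 1) * y ^ (α - 1) * |v - y| ^ (2*H - 2))) < ⊤ := by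
  subst hα
  set F : ℝ → ℝ → ℝ≥0∞ := fun a b =>
    ENNReal.ofReal (a ^ (-(1:ℝ)/2) * b ^ (-(1:ℝ)/2) * |a - b| ^ (2*H - 2)) with hF
  have hJ : (∫⁻ u in Ioo (0:ℝ) T, ∫⁻ x in Ioo (0:ℝ) T, F u x) < ⊤ := J_lt_top H T hH hH1 hT
  calc (∫⁻ u in Set.Ioo (0:ℝ) T, ∫⁻ x in Set.Ioo (0:ℝ) T,
      ∫⁻ v in Set.Ioo u T, ∫⁻ y in Set.Ioo x T,
        ENNReal.ofReal (u ^ (-(1-H)) * x ^ (-(1-H)) * |u - x| ^ (2*H - 2) *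
          v ^ ((1-H) - 1) * y ^ ((1-H) - 1) * |v - y| ^ (2*H - 2)))
      ≤ ∫⁻ u in Ioo (0:ℝ) T, ∫⁻ x in Ioo (0:ℝ) T,
          F u x * (∫⁻ v in Ioo (0:ℝ) T, ∫⁻ y in Ioo (0:ℝ) T, F v y) := by
        refine setLIntegral_mono' measurableSet_Ioo fun u hu => ?_
        refine setLIntegral_mono' measurableSet_Ioo fun x hx => ?_
        have hu0 : 0 < u := hu.1
        have hx0 : 0 < x := hx.1
        calc (∫⁻ v in Set.Ioo u T, ∫⁻ y in Set.Ioo x T,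
            ENNReal.ofReal (u ^ (-(1-H)) * x ^ (-(1-H)) * |u - x| ^ (2*H - 2) *
              v ^ ((1-H) - 1) * y ^ ((1-H) - 1) * |v - y| ^ (2*H - 2)))
            ≤ ∫⁻ v in Ioo u T, ∫⁻ y in Ioo x T, F u x * F v y := by
              refine setLIntegral_mono' measurableSet_Ioo fun v hv => ?_
              refine setLIntegral_mono' measurableSet_Ioo fun y hy => ?_
              have hv0 : 0 < v := hu0.trans hv.1
              have hy0 : 0 < y := hx0.trans hy.1
              have p1 := pair_le H hH hu0 hv.1
              have p2 := pair_le H hH hx0 hy.1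
              have hA : (0:ℝ) ≤ |u - x| ^ (2*H - 2) := Real.rpow_nonneg (abs_nonneg _) _
              have hB : (0:ℝ) ≤ |v - y| ^ (2*H - 2) := Real.rpow_nonneg (abs_nonneg _) _
              rw [show (-(1-H):ℝ) = H - 1 by ring, show ((1-H) - 1:ℝ) = -H by ring, hF]
              rw [← ENNReal.ofReal_mul (mul_nonneg (mul_nonneg
                (Real.rpow_nonneg hu0.le _) (Real.rpow_nonneg hx0.le _)) hA)]
              apply ENNReal.ofReal_le_ofReal
              calc u ^ (H-1) * x ^ (H-1) * |u - x| ^ (2*H - 2) * v ^ (-H) * y ^ (-H)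
                    * |v - y| ^ (2*H - 2)
                  = (u ^ (H-1) * v ^ (-H)) * ((x ^ (H-1) * y ^ (-H))
                      * (|u - x| ^ (2*H - 2) * |v - y| ^ (2*H - 2))) := by ring
                _ ≤ (u ^ (-(1:ℝ)/2) * v ^ (-(1:ℝ)/2)) * ((x ^ (-(1:ℝ)/2) * y ^ (-(1:ℝ)/2))
                      * (|u - x| ^ (2*H - 2) * |v - y| ^ (2*H - 2))) := by
                    refine mul_le_mul p1 (mul_le_mul p2 le_rfl (mul_nonneg hA hB)
                      (mul_nonneg (Real.rpow_nonneg hx0.le _) (Real.rpow_nonneg hy0.le _)))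
                      ?_ (mul_nonneg (Real.rpow_nonneg hu0.le _) (Real.rpow_nonneg hv0.le _))
                    exact mul_nonneg (mul_nonneg (Real.rpow_nonneg hx0.le _)
                      (Real.rpow_nonneg hy0.le _)) (mul_nonneg hA hB)
                _ = u ^ (-(1:ℝ)/2) * x ^ (-(1:ℝ)/2) * |u - x| ^ (2*H - 2)
                      * (v ^ (-(1:ℝ)/2) * y ^ (-(1:ℝ)/2) * |v - y| ^ (2*H - 2)) := by ring
          _ = F u x * ∫⁻ v in Ioo u T, ∫⁻ y in Ioo x T, F v y := by
              rw [lintegral_congr fun v =>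
                lintegral_const_mul' (F u x) _ ENNReal.ofReal_ne_top]
              exact lintegral_const_mul' _ _ ENNReal.ofReal_ne_top
          _ ≤ F u x * (∫⁻ v in Ioo (0:ℝ) T, ∫⁻ y in Ioo (0:ℝ) T, F v y) := by
              refine mul_le_mul_right ?_ _
              calc ∫⁻ v in Ioo u T, ∫⁻ y in Ioo x T, F v y
                  ≤ ∫⁻ v in Ioo u T, ∫⁻ y in Ioo (0:ℝ) T, F v y :=
                    lintegral_mono fun v => lintegral_mono_set (Ioo_subset_Ioo hx0.le le_rfl)
                _ ≤ ∫⁻ v in Ioo (0:ℝ) T, ∫⁻ y in Ioo (0:ℝ) T, F v y :=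
                    lintegral_mono_set (Ioo_subset_Ioo hu0.le le_rfl)
    _ = (∫⁻ u in Ioo (0:ℝ) T, ∫⁻ x in Ioo (0:ℝ) T, F u x)
          * (∫⁻ v in Ioo (0:ℝ) T, ∫⁻ y in Ioo (0:ℝ) T, F v y) := by
        rw [lintegral_congr fun u =>
          lintegral_mul_const' _ _ hJ.ne]
        exact lintegral_mul_const' _ _ hJ.ne
    _ < ⊤ := ENNReal.mul_lt_top hJ hJ
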